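/- Let X = (X₁,...,X_m) be a non-degenerate wide-sense multi-self-similar ℝ^m-valued random field on T = [0,∞)^d with scaling functions f and shift functions g, and suppose for some index j that f_j(a) = 1 for all a ∈ (0,∞)^d (i.e. the exponent vector H^{(j)} is identically zero). Then g_j(a) = 0 for all a ∈ (0,∞)^d and, for every t ∈ T, X_j(t) = X_j(0) almost surely. -/

import Mathlib

open MeasureTheory Filter Topology

open Set in
/-- A probability measure on ℝ invariant under translation by `c` forces `c = 0`. -/
lemma translate_invariant_eq_zero (μ : Measure ℝ) [IsProbabilityMeasure μ] (c : ℝ)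
    (h : μ = μ.map (· + c)) : c = 0 := by
  by_contra hc
  have key : ∀ x : ℝ, μ (Iic x) = μ (Iic (x - c)) := by
    intro x
    conv_lhs => rw [h]
    rw [Measure.map_apply (measurable_add_const c) measurableSet_Iic]
    congr 1
    ext y
    simp [Set.mem_Iic, le_sub_iff_add_le]
  set b := |c| with hb
  have hbpos : 0 < b := abs_pos.2 hc
  have keyb : ∀ x : ℝ, μ (Iic x) = μ (Iic (x - b)) := by
    intro x
    rcases abs_cases c with ⟨hbc, _⟩ | ⟨hbc, _⟩
    · rw [hb, hbc]; exact key x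
    · rw [hb, hbc, sub_neg_eq_add]
      have := key (x + c)
      simpa using this.symm
  have hiter : ∀ n : ℕ, ∀ x : ℝ, μ (Iic x) = μ (Iic (x - n * b)) := by
    intro n
    induction n with
    | zero => intro x; simp
    | succ k ih =>
      intro x
      have h1 := ih x
      have h2 := keyb (x - k * b)
      rw [h1, h2]
      congr 2
      push_cast
      ring
  have hzero : ∀ x : ℝ, μ (Iic x) = 0 := by
    intro x
    have hanti : Antitone (fun n : ℕ => Iic (x - n * b)) := by
      intro p q hpq
      apply Iic_subset_Iic.2
      have : (p : ℝ) * b ≤ q * b := by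
        apply mul_le_mul_of_nonneg_right _ hbpos.le
        exact_mod_cast hpq
      linarith
    have hinter : (⋂ n : ℕ, Iic (x - n * b)) = ∅ := by
      ext y
      simp only [mem_iInter, mem_Iic, mem_empty_iff_false, iff_false, not_forall, not_le]
      obtain ⟨n, hn⟩ := exists_nat_gt ((x - y) / b)
      exact ⟨n, by rw [div_lt_iff₀ hbpos] at hn; linarith⟩
    have htend : Tendsto (fun n : ℕ => μ (Iic (x - n * b))) atTop (𝓝 (μ (⋂ n : ℕ, Iic (x - n * b)))) :=
      tendsto_measure_iInter_atTop (fun _ => measurableSet_Iic.nullMeasurableSet) hanti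
        ⟨0, measure_ne_top _ _⟩
    rw [hinter, measure_empty] at htend
    have hconst : (fun n : ℕ => μ (Iic (x - n * b))) = fun _ => μ (Iic x) := by
      funext n; exact (hiter n x).symm
    rw [hconst] at htend
    exact tendsto_nhds_unique tendsto_const_nhds htend
  have huniv : Tendsto (fun n : ℕ => μ (Iic (n : ℝ))) atTop (𝓝 (μ univ)) :=
    (tendsto_measure_Iic_atTop μ).comp tendsto_natCast_atTop_atTop
  have : (fun n : ℕ => μ (Iic (n : ℝ))) = fun _ => 0 := funext fun n => hzero n
  rw [this] at huniv
  have := tendsto_nhds_unique tendsto_const_nhds huniv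
  simp [measure_univ] at this

/-- Let `X` be a non-degenerate wide-sense multi-self-similar
`ℝ^m`-valued random field on `T = [0,∞)^d` with scaling functions `f` and shift
functions `g`, and suppose `f_j(a) = 1` for all `a ∈ (0,∞)^d` for some index `j`.
Then `g_j(a) = 0` for all `a ∈ (0,∞)^d` and, for every `t ∈ T`,
`X_j(t) = X_j(0)` almost surely. -/
theorem stmt_11 {d m : ℕ} {Ω : Type*} [MeasurableSpace Ω]
    (P : Measure Ω) [IsProbabilityMeasure P]
    (X : (Fin d → ℝ) → Ω → (Fin m → ℝ))
    (hXmeas : ∀ t, Measurable (X t))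
    -- stochastic continuity on `[0,∞)^d`
    (hXcont : ∀ t : Fin d → ℝ, (∀ i, 0 ≤ t i) →
      ∀ u : ℕ → Fin d → ℝ, (∀ n i, 0 ≤ u n i) → Tendsto u atTop (𝓝 t) →
        TendstoInMeasure P (fun n => X (u n)) atTop (X t))
    (f : (Fin d → ℝ) → Fin m → ℝ) (g : (Fin d → ℝ) → Fin m → ℝ)
    (hfpos : ∀ a : Fin d → ℝ, (∀ i, 0 < a i) → ∀ j, 0 < f a j)
    -- wide-sense multi-self-similarity
    (hss : ∀ a : Fin d → ℝ, (∀ i, 0 < a i) →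
      ∀ (k : ℕ) (t : Fin k → Fin d → ℝ), (∀ i i', 0 ≤ t i i') →
        Measure.map (fun ω => fun i => X (a * t i) ω) P
          = Measure.map (fun ω => fun i => fun j => f a j * X (t i) ω j + g a j) P)
    -- non-degeneracy: `X_j(1,...,1)` is not a.s. constant
    (hnd : ∀ j, ¬ ∃ c : ℝ, ∀ᵐ ω ∂P, X (fun _ => 1) ω j = c)
    (j : Fin m)
    (hfj : ∀ a : Fin d → ℝ, (∀ i, 0 < a i) → f a j = 1) :
    (∀ a : Fin d → ℝ, (∀ i, 0 < a i) → g a j = 0) ∧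
    (∀ t : Fin d → ℝ, (∀ i, 0 ≤ t i) → ∀ᵐ ω ∂P, X t ω j = X 0 ω j) := by
  have hXj : ∀ t : Fin d → ℝ, Measurable (fun ω => X t ω j) :=
    fun t => (measurable_pi_apply j).comp (hXmeas t)
  constructor
  · -- g a j = 0
    intro a ha
    set t0 : Fin 1 → Fin d → ℝ := fun _ => 0 with ht0
    have h1 := hss a ha 1 t0 (fun _ _ => le_refl 0)
    -- push forward by v ↦ v 0 j
    have hφ : Measurable (fun v : Fin 1 → Fin m → ℝ => v 0 j) :=
      (measurable_pi_apply j).comp (measurable_pi_apply 0)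
    have hL : Measurable (fun ω => fun i : Fin 1 => X (a * t0 i) ω) :=
      measurable_pi_lambda _ (fun _ => hXmeas _)
    have hR : Measurable (fun ω => fun i : Fin 1 => fun j' => f a j' * X (t0 i) ω j' + g a j') :=
      measurable_pi_lambda _ (fun _ => measurable_pi_lambda _
        (fun j' => (measurable_const.mul ((measurable_pi_apply j').comp (hXmeas _))).add
          measurable_const))
    have h2 := congrArg (Measure.map (fun v : Fin 1 → Fin m → ℝ => v 0 j)) h1
    rw [Measure.map_map hφ hL, Measure.map_map hφ hR] at h2
    have ha0 : a * t0 0 = 0 := by funext i; simp [ht0]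
    have hL' : ((fun v : Fin 1 → Fin m → ℝ => v 0 j) ∘
        (fun ω => fun i : Fin 1 => X (a * t0 i) ω)) = fun ω => X 0 ω j := by
      funext ω; simp [Function.comp, ha0]
    have hR' : ((fun v : Fin 1 → Fin m → ℝ => v 0 j) ∘
        (fun ω => fun i : Fin 1 => fun j' => f a j' * X (t0 i) ω j' + g a j'))
        = fun ω => X 0 ω j + g a j := by
      funext ω
      simp [Function.comp, hfj a ha, one_mul, ht0]
    rw [hL', hR'] at h2
    -- h2 : map (X 0 · j) P = map (X 0 · j + g a j) P
    have hmapc : Measure.map (fun ω => X 0 ω j + g a j) P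
        = (Measure.map (fun ω => X 0 ω j) P).map (· + g a j) := by
      rw [Measure.map_map (measurable_add_const _) (hXj 0)]
      rfl
    have : IsProbabilityMeasure (Measure.map (fun ω => X 0 ω j) P) :=
      Measure.isProbabilityMeasure_map (hXj 0).aemeasurable
    exact translate_invariant_eq_zero (Measure.map (fun ω => X 0 ω j) P) (g a j) (h2.trans hmapc)
  · -- a.s. constancy
    intro t ht
    set Z : Ω → ℝ := fun ω => X t ω j - X 0 ω j with hZdef
    have hZ : Measurable Z := (hXj t).sub (hXj 0)
    -- sequence of scalings
    set u : ℕ → Fin d → ℝ := fun n => (fun _ : Fin d => (1 : ℝ) / (n + 1)) * t with hu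
    have hun : ∀ n i, 0 ≤ u n i := by
      intro n i
      have : (0:ℝ) < 1 / (n + 1) := by positivity
      exact mul_nonneg this.le (ht i)
    have hutend : Tendsto u atTop (𝓝 0) := by
      rw [tendsto_pi_nhds]
      intro i
      have h0 : Tendsto (fun n : ℕ => (1 : ℝ) / (n + 1) * t i) atTop (𝓝 (0 * t i)) :=
        tendsto_one_div_add_atTop_nhds_zero_nat.mul_const (t i)
      rw [zero_mul] at h0
      exact h0
    have hmeasconv := hXcont 0 (fun _ => le_refl 0) u hun hutend
    -- law equality of increments : map (X (u n) · j - X 0 · j) P = map Z P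
    have hlaw : ∀ n : ℕ, Measure.map (fun ω => X (u n) ω j - X 0 ω j) P = Measure.map Z P := by
      intro n
      set a : Fin d → ℝ := fun _ : Fin d => (1 : ℝ) / (n + 1) with hadef
      have hapos : ∀ i, 0 < a i := fun i => by positivity
      set tv : Fin 2 → Fin d → ℝ := ![t, 0] with htv
      have htvn : ∀ i i', 0 ≤ tv i i' := by
        intro i i'
        fin_cases i
        · simpa [htv] using ht i'
        · simp [htv]
      have h1 := hss a hapos 2 tv htvn
      have hφ : Measurable (fun v : Fin 2 → Fin m → ℝ => v 0 j - v 1 j) :=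
        ((measurable_pi_apply j).comp (measurable_pi_apply 0)).fun_sub
          ((measurable_pi_apply j).comp (measurable_pi_apply 1))
      have hL : Measurable (fun ω => fun i : Fin 2 => X (a * tv i) ω) :=
        measurable_pi_lambda _ (fun _ => hXmeas _)
      have hR : Measurable (fun ω => fun i : Fin 2 => fun j' => f a j' * X (tv i) ω j' + g a j') :=
        measurable_pi_lambda _ (fun _ => measurable_pi_lambda _
          (fun j' => (measurable_const.mul ((measurable_pi_apply j').comp (hXmeas _))).add
            measurable_const))
      have h2 := congrArg (Measure.map (fun v : Fin 2 → Fin m → ℝ => v 0 j - v 1 j)) h1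
      rw [Measure.map_map hφ hL, Measure.map_map hφ hR] at h2
      have htv0 : tv 0 = t := by simp [htv]
      have htv1 : tv 1 = 0 := by simp [htv]
      have ha0 : a * (0 : Fin d → ℝ) = 0 := by funext i; simp
      have hL' : ((fun v : Fin 2 → Fin m → ℝ => v 0 j - v 1 j) ∘
          (fun ω => fun i : Fin 2 => X (a * tv i) ω))
          = fun ω => X (u n) ω j - X 0 ω j := by
        funext ω
        simp only [Function.comp, htv0, htv1, ha0]
        rfl
      have hR' : ((fun v : Fin 2 → Fin m → ℝ => v 0 j - v 1 j) ∘
          (fun ω => fun i : Fin 2 => fun j' => f a j' * X (tv i) ω j' + g a j'))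
          = Z := by
        funext ω
        simp only [Function.comp, htv0, htv1, hfj a hapos, one_mul, hZdef]
        ring
      rw [hL', hR'] at h2
      exact h2
    -- for each ε > 0, P {ε ≤ |Z|} = 0
    have hε : ∀ ε : ℝ, 0 < ε → P {ω | ε ≤ |Z ω|} = 0 := by
      intro ε hεpos
      have hS : MeasurableSet {x : ℝ | ε ≤ |x|} :=
        measurableSet_le measurable_const measurable_abs
      have hle : ∀ n : ℕ, P {ω | ε ≤ |Z ω|}
          ≤ P {ω | ε ≤ dist (X (u n) ω) (X 0 ω)} := by
        intro n
        have e1 : P {ω | ε ≤ |Z ω|} = (Measure.map Z P) {x | ε ≤ |x|} :=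
          (Measure.map_apply hZ hS).symm
        have e2 : (Measure.map Z P) {x | ε ≤ |x|}
            = P {ω | ε ≤ |X (u n) ω j - X 0 ω j|} := by
          rw [← hlaw n, Measure.map_apply ((hXj (u n)).fun_sub (hXj 0)) hS]
          rfl
        rw [e1, e2]
        apply measure_mono
        intro ω hω
        simp only [Set.mem_setOf_eq] at hω ⊢
        calc ε ≤ |X (u n) ω j - X 0 ω j| := hω
          _ = dist (X (u n) ω j) (X 0 ω j) := (Real.dist_eq _ _).symm
          _ ≤ dist (X (u n) ω) (X 0 ω) := dist_le_pi_dist _ _ _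
      have htend := hmeasconv (ENNReal.ofReal ε) (ENNReal.ofReal_pos.2 hεpos)
      simp only [edist_dist, ENNReal.ofReal_le_ofReal_iff dist_nonneg] at htend
      have := ge_of_tendsto' htend hle
      exact le_antisymm this (by positivity)
    -- conclude a.e. equality
    rw [ae_iff]
    have hsub : {ω | ¬ X t ω j = X 0 ω j} ⊆ ⋃ k : ℕ, {ω | 1 / ((k : ℝ) + 1) ≤ |Z ω|} := by
      intro ω hω
      simp only [Set.mem_setOf_eq] at hω
      have hne : Z ω ≠ 0 := sub_ne_zero.2 hω
      have hpos : 0 < |Z ω| := abs_pos.2 hne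
      obtain ⟨k, hk⟩ := exists_nat_one_div_lt hpos
      exact Set.mem_iUnion.2 ⟨k, hk.le⟩
    refine measure_mono_null hsub (measure_iUnion_null fun k => hε _ (by positivity))
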